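/- Let g be a nondegenerate symmetric bilinear form on ℝ⁴ with matrix (g_{ab}) and inverse matrix (g^{ab}), and A a linear form with components A_a; write g(y,y) = Σ g_{ab}y^a y^b, A(y) = Σ A_a y^a and g⁻¹(A,A) = Σ g^{ab}A_a A_b. Fix q ∈ ℝ and define L(y) = g(y,y)^{1−q} · A(y)^{2q} on the open set {y : g(y,y) > 0 and A(y) > 0}; let g^L(y) have entries g^L_{ab}(y) = (1/2)∂²L/∂y^a∂y^b(y). Then for every such y, det(g^L(y)) = det(g_{ab}) · (1−q)³ · [ (1+q)A(y)² − q·g⁻¹(A,A)·g(y,y) ] · g(y,y)^{−4q} · A(y)^{−2(1−4q)}. -/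

import Mathlib

noncomputable section

/-- The quadratic form `g(y,y) = Σ g_{ab} y^a y^b` of a 4×4 matrix. -/
def quadForm (g : Matrix (Fin 4) (Fin 4) ℝ) (y : Fin 4 → ℝ) : ℝ :=
  ∑ a, ∑ b, g a b * y a * y b

/-- The linear form `A(y) = Σ A_a y^a`. -/
def linForm (A : Fin 4 → ℝ) (y : Fin 4 → ℝ) : ℝ := ∑ a, A a * y a

/-- `g⁻¹(A,A) = Σ g^{ab} A_a A_b`. -/
def coQuadForm (g : Matrix (Fin 4) (Fin 4) ℝ) (A : Fin 4 → ℝ) : ℝ :=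
  ∑ a, ∑ b, g⁻¹ a b * A a * A b

/-- The L-metric: the matrix `g^L_{ab}(y) = (1/2) ∂²L/∂y^a∂y^b (y)`. -/
def Lmetric (L : (Fin 4 → ℝ) → ℝ) (y : Fin 4 → ℝ) : Matrix (Fin 4) (Fin 4) ℝ :=
  Matrix.of fun a b =>
    (1 / 2) * fderiv ℝ (fun z => fderiv ℝ L z (Pi.single b 1)) y (Pi.single a 1)

set_option maxHeartbeats 1000000

lemma det_fin_four' (M : Matrix (Fin 4) (Fin 4) ℝ) :
    M.det =
      M 0 0 * (M 1 1 * (M 2 2 * M 3 3 - M 2 3 * M 3 2) - M 1 2 * (M 2 1 * M 3 3 - M 2 3 * M 3 1) + M 1 3 * (M 2 1 * M 3 2 - M 2 2 * M 3 1))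
    - M 0 1 * (M 1 0 * (M 2 2 * M 3 3 - M 2 3 * M 3 2) - M 1 2 * (M 2 0 * M 3 3 - M 2 3 * M 3 0) + M 1 3 * (M 2 0 * M 3 2 - M 2 2 * M 3 0))
    + M 0 2 * (M 1 0 * (M 2 1 * M 3 3 - M 2 3 * M 3 1) - M 1 1 * (M 2 0 * M 3 3 - M 2 3 * M 3 0) + M 1 3 * (M 2 0 * M 3 1 - M 2 1 * M 3 0))
    - M 0 3 * (M 1 0 * (M 2 1 * M 3 2 - M 2 2 * M 3 1) - M 1 1 * (M 2 0 * M 3 2 - M 2 2 * M 3 0) + M 1 2 * (M 2 0 * M 3 1 - M 2 1 * M 3 0)) := by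
  rw [Matrix.det_succ_row_zero]
  simp [Fin.sum_univ_succ, Matrix.det_fin_three, Matrix.submatrix_apply, Fin.succAbove,
    show (Fin.succ 0 : Fin 4) = 1 from rfl, show (Fin.succ 1 : Fin 4) = 2 from rfl,
    show (Fin.succ 2 : Fin 4) = 3 from rfl, show (Fin.castSucc 1 : Fin 4) = 1 from rfl,
    show (Fin.castSucc 2 : Fin 4) = 2 from rfl, show (Fin.castSucc 0 : Fin 4) = 0 from rfl]
  ring

lemma det_rank_two (α : ℝ) (x r w s : Fin 4 → ℝ) :
    (Matrix.of fun i j : Fin 4 => α * (if i = j then (1:ℝ) else 0) + x i * r j + w i * s j).det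
    = α^4 + α^3 * ((∑ i, r i * x i) + (∑ i, s i * w i)) +
      α^2 * ((∑ i, r i * x i) * (∑ i, s i * w i) - (∑ i, r i * w i) * (∑ i, s i * x i)) := by
  rw [det_fin_four']
  simp only [Matrix.of_apply, Fin.sum_univ_four, reduceIte, Fin.reduceEq]
  ring

lemma hasFDerivAt_proj (a : Fin 4) (z : Fin 4 → ℝ) :
    HasFDerivAt (fun y : Fin 4 → ℝ => y a)
      (ContinuousLinearMap.proj (R := ℝ) (φ := fun _ : Fin 4 => ℝ) a) z :=
  (ContinuousLinearMap.proj (R := ℝ) (φ := fun _ : Fin 4 => ℝ) a).hasFDerivAt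

lemma lin_deriv (A : Fin 4 → ℝ) (z : Fin 4 → ℝ) :
    ∃ D : (Fin 4 → ℝ) →L[ℝ] ℝ, HasFDerivAt (linForm A) D z ∧
      ∀ c, D (Pi.single c 1) = A c := by
  refine ⟨∑ a, A a • ContinuousLinearMap.proj a, ?_, ?_⟩
  · exact HasFDerivAt.fun_sum fun a _ => ((hasFDerivAt_proj a z).const_mul (A a))
  · intro c
    simp [ContinuousLinearMap.sum_apply, Pi.single_apply]

lemma quad_deriv (g : Matrix (Fin 4) (Fin 4) ℝ) (hgs : g.IsSymm) (z : Fin 4 → ℝ) :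
    ∃ D : (Fin 4 → ℝ) →L[ℝ] ℝ, HasFDerivAt (quadForm g) D z ∧
      ∀ c, D (Pi.single c 1) = 2 * g.mulVec z c := by
  refine ⟨∑ a, ∑ b, ((g a b * z a) • ContinuousLinearMap.proj b
      + z b • ((g a b) • ContinuousLinearMap.proj a)), ?_, ?_⟩
  · exact HasFDerivAt.fun_sum fun a _ => HasFDerivAt.fun_sum fun b _ =>
      ((hasFDerivAt_proj a z).const_mul (g a b)).fun_mul (hasFDerivAt_proj b z)
  · intro c
    simp only [ContinuousLinearMap.sum_apply, ContinuousLinearMap.add_apply,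
      ContinuousLinearMap.smul_apply, ContinuousLinearMap.proj_apply, Pi.single_apply,
      smul_eq_mul, mul_ite, mul_one, mul_zero]
    rw [Finset.sum_comm]
    simp only [Finset.sum_add_distrib, Finset.sum_ite_eq', Finset.mem_univ, if_true]
    rw [Finset.sum_comm]
    simp only [Finset.sum_ite_eq', Finset.mem_univ, if_true]
    have e1 : ∑ j, g j c * z j = ∑ j, g c j * z j :=
      Finset.sum_congr rfl fun j _ => by rw [hgs.apply c j]
    have e2 : ∑ j, z j * g c j = ∑ j, g c j * z j :=
      Finset.sum_congr rfl fun j _ => by ring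
    rw [e1, e2]
    show _ = 2 * ∑ j, g c j * z j
    ring

lemma mulvec_deriv (g : Matrix (Fin 4) (Fin 4) ℝ) (b : Fin 4) (z : Fin 4 → ℝ) :
    ∃ D : (Fin 4 → ℝ) →L[ℝ] ℝ, HasFDerivAt (fun w => g.mulVec w b) D z ∧
      ∀ c, D (Pi.single c 1) = g b c := by
  refine ⟨∑ j, g b j • ContinuousLinearMap.proj j, ?_, ?_⟩
  · show HasFDerivAt (fun w : Fin 4 → ℝ => ∑ j, g b j * w j) _ z
    exact HasFDerivAt.fun_sum fun j _ => ((hasFDerivAt_proj j z).const_mul (g b j))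
  · intro c
    simp [ContinuousLinearMap.sum_apply, Pi.single_apply]

/-- Determinant of the L-metric of the Bogoslovsky/Kropina type Lagrangian
`L = g(y,y)^{1−q} A(y)^{2q}` on the set where `g(y,y) > 0` and `A(y) > 0`:
`det g^L = det g · (1−q)³ [(1+q)A(y)² − q g⁻¹(A,A) g(y,y)] g(y,y)^{−4q} A(y)^{−2(1−4q)}`. -/
theorem bogoslovsky_kropina_det (g : Matrix (Fin 4) (Fin 4) ℝ) (hgs : g.IsSymm)
    (hgdet : g.det ≠ 0) (A : Fin 4 → ℝ) (q : ℝ) (L : (Fin 4 → ℝ) → ℝ)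
    (hLdef : ∀ y : Fin 4 → ℝ, 0 < quadForm g y → 0 < linForm A y →
      L y = (quadForm g y) ^ (1 - q) * (linForm A y) ^ (2 * q)) :
    ∀ y : Fin 4 → ℝ, 0 < quadForm g y → 0 < linForm A y →
      (Lmetric L y).det =
        g.det * (1 - q) ^ 3 *
          ((1 + q) * (linForm A y) ^ 2 - q * coQuadForm g A * quadForm g y) *
          (quadForm g y) ^ (-(4 * q)) * (linForm A y) ^ (-(2 * (1 - 4 * q))) := by
  have hcq : Continuous (quadForm g) := by
    unfold quadForm
    exact continuous_finset_sum _ fun a _ => continuous_finset_sum _ fun b _ =>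
      ((continuous_const.mul (continuous_apply a)).mul (continuous_apply b))
  have hcl : Continuous (linForm A) := by
    unfold linForm
    exact continuous_finset_sum _ fun a _ => (continuous_const.mul (continuous_apply a))
  have hUopen : IsOpen {z : Fin 4 → ℝ | 0 < quadForm g z ∧ 0 < linForm A z} :=
    (isOpen_lt continuous_const hcq).inter (isOpen_lt continuous_const hcl)
  -- first derivative
  have key1 : ∀ z : Fin 4 → ℝ, 0 < quadForm g z → 0 < linForm A z → ∀ b : Fin 4,
      fderiv ℝ L z (Pi.single b 1)
        = (1 - q) * (quadForm g z ^ (-q) * (linForm A z ^ (2*q) * (2 * g.mulVec z b)))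
          + 2*q * (quadForm g z ^ (1-q) * (linForm A z ^ (2*q-1) * A b)) := by
    intro z hz1 hz2 b
    obtain ⟨DF, hDF, hDFv⟩ := quad_deriv g hgs z
    obtain ⟨DP, hDP, hDPv⟩ := lin_deriv A z
    have h1 : HasFDerivAt (fun w => quadForm g w ^ (1-q))
        (((1-q) * quadForm g z ^ (1-q-1)) • DF) z := hDF.rpow_const (Or.inl hz1.ne')
    have h2 : HasFDerivAt (fun w => linForm A w ^ (2*q))
        ((2*q * linForm A z ^ (2*q-1)) • DP) z := hDP.rpow_const (Or.inl hz2.ne')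
    have hE := h1.mul h2
    have hev : L =ᶠ[nhds z] fun w => quadForm g w ^ (1-q) * linForm A w ^ (2*q) :=
      Filter.eventually_of_mem (hUopen.mem_nhds ⟨hz1, hz2⟩) fun w hw => hLdef w hw.1 hw.2
    rw [(hE.congr_of_eventuallyEq hev).fderiv]
    simp only [ContinuousLinearMap.add_apply, ContinuousLinearMap.smul_apply, smul_eq_mul,
      hDFv, hDPv]
    rw [show (1:ℝ) - q - 1 = -q by ring]
    ring
  intro y hu hv
  -- rpow conversion facts
  have em : quadForm g y ^ (-q) = quadForm g y ^ (-q-1) * quadForm g y := by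
    have h := Real.rpow_add hu (-q-1) 1
    rw [show -q-1+(1:ℝ) = -q by ring, Real.rpow_one] at h
    exact h
  have e1q : quadForm g y ^ (1-q) = quadForm g y ^ (-q) * quadForm g y := by
    have h := Real.rpow_add hu (-q) 1
    rw [show -q+(1:ℝ) = 1-q by ring, Real.rpow_one] at h
    exact h
  have ev1 : linForm A y ^ (2*q-1) = linForm A y ^ (2*q-2) * linForm A y := by
    have h := Real.rpow_add hv (2*q-2) 1
    rw [show 2*q-2+(1:ℝ) = 2*q-1 by ring, Real.rpow_one] at h
    exact h
  have ev2 : linForm A y ^ (2*q) = linForm A y ^ (2*q-1) * linForm A y := by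
    have h := Real.rpow_add hv (2*q-1) 1
    rw [show 2*q-1+(1:ℝ) = 2*q by ring, Real.rpow_one] at h
    exact h
  -- Hessian entries
  have hess : ∀ a b : Fin 4, Lmetric L y a b
      = ((1-q) * (quadForm g y ^ (-q-1) * quadForm g y) * (linForm A y ^ (2*q-2) * linForm A y * linForm A y)) * g a b
        + (-(2*q) * (1-q) * quadForm g y ^ (-q-1) * (linForm A y ^ (2*q-2) * linForm A y * linForm A y)) * (g.mulVec y a * g.mulVec y b)
        + (2*q * (1-q) * (quadForm g y ^ (-q-1) * quadForm g y) * (linForm A y ^ (2*q-2) * linForm A y)) * (g.mulVec y a * A b + A a * g.mulVec y b)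
        + (q * (2*q-1) * (quadForm g y ^ (-q-1) * quadForm g y * quadForm g y) * linForm A y ^ (2*q-2)) * (A a * A b) := by
    intro a b
    obtain ⟨DF, hDF, hDFv⟩ := quad_deriv g hgs y
    obtain ⟨DP, hDP, hDPv⟩ := lin_deriv A y
    obtain ⟨DM, hDM, hDMv⟩ := mulvec_deriv g b y
    have hA : HasFDerivAt (fun z => quadForm g z ^ (-q))
        ((-q * quadForm g y ^ (-q-1)) • DF) y := hDF.rpow_const (Or.inl hu.ne')
    have hB : HasFDerivAt (fun z => linForm A z ^ (2*q))
        ((2*q * linForm A y ^ (2*q-1)) • DP) y := hDP.rpow_const (Or.inl hv.ne')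
    have hC : HasFDerivAt (fun z => 2 * g.mulVec z b) ((2:ℝ) • DM) y := hDM.const_mul 2
    have hA' : HasFDerivAt (fun z => quadForm g z ^ (1-q))
        (((1-q) * quadForm g y ^ (1-q-1)) • DF) y := hDF.rpow_const (Or.inl hu.ne')
    have hB' : HasFDerivAt (fun z => linForm A z ^ (2*q-1))
        (((2*q-1) * linForm A y ^ (2*q-1-1)) • DP) y := hDP.rpow_const (Or.inl hv.ne')
    have htot := ((hA.fun_mul (hB.fun_mul hC)).const_mul (1-q)).fun_add
      ((hA'.fun_mul (hB'.mul_const (A b))).const_mul (2*q))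
    have heq : (fun z => fderiv ℝ L z (Pi.single b 1)) =ᶠ[nhds y] (fun z =>
        (1 - q) * (quadForm g z ^ (-q) * (linForm A z ^ (2*q) * (2 * g.mulVec z b)))
          + 2*q * (quadForm g z ^ (1-q) * (linForm A z ^ (2*q-1) * A b))) :=
      Filter.eventually_of_mem (hUopen.mem_nhds ⟨hu, hv⟩) fun z hz => key1 z hz.1 hz.2 b
    show (1 / 2) * fderiv ℝ (fun z => fderiv ℝ L z (Pi.single b 1)) y (Pi.single a 1) = _
    rw [heq.fderiv_eq, htot.fderiv]
    simp only [ContinuousLinearMap.add_apply, ContinuousLinearMap.smul_apply, smul_eq_mul,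
      hDFv, hDPv, hDMv]
    rw [show (1:ℝ) - q - 1 = -q by ring, show 2*q-1-1 = 2*q-2 by ring, e1q, em, ev2, ev1,
      hgs.apply b a]
    ring
  have hginv : g * g⁻¹ = 1 := Matrix.mul_nonsing_inv g (isUnit_iff_ne_zero.mpr hgdet)
  have hgw : g.mulVec (g⁻¹.mulVec A) = A := by
    rw [Matrix.mulVec_mulVec, hginv, Matrix.one_mulVec]
  have hgwa : ∀ a, ∑ c, g a c * (g⁻¹.mulVec A) c = A a := fun a => congrFun hgw a
  have h_py : ∑ i, g.mulVec y i * y i = quadForm g y := by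
    show ∑ i, (∑ j, g i j * y j) * y i = _
    unfold quadForm
    simp only [Finset.sum_mul]
    exact Finset.sum_congr rfl fun i _ => Finset.sum_congr rfl fun j _ => by ring
  have h_pw : ∑ i, g.mulVec y i * (g⁻¹.mulVec A) i = linForm A y := by
    have h3 : Matrix.vecMul (g⁻¹.mulVec A) g = A := by
      have h4 := Matrix.vecMul_transpose g (g⁻¹.mulVec A)
      rw [hgs.eq] at h4
      rw [h4, hgw]
    show dotProduct (g.mulVec y) (g⁻¹.mulVec A) = linForm A y
    rw [dotProduct_comm, Matrix.dotProduct_mulVec, h3]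
    rfl
  have h_Aw : ∑ i, A i * (g⁻¹.mulVec A) i = coQuadForm g A := by
    have t : ∀ i, A i * (g⁻¹.mulVec A) i = ∑ j, g⁻¹ i j * A i * A j := fun i => by
      show A i * (∑ j, g⁻¹ i j * A j) = _
      rw [Finset.mul_sum]
      exact Finset.sum_congr rfl fun j _ => by ring
    rw [Finset.sum_congr rfl fun i _ => t i]
    rfl
  -- decomposition  Lmetric = g * M
  have hLM : Lmetric L y = g * Matrix.of (fun i j : Fin 4 =>
      ((1-q) * (quadForm g y ^ (-q-1) * quadForm g y) * (linForm A y ^ (2*q-2) * linForm A y * linForm A y)) * (if i = j then (1:ℝ) else 0)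
      + y i * ((-(2*q) * (1-q) * quadForm g y ^ (-q-1) * (linForm A y ^ (2*q-2) * linForm A y * linForm A y)) * g.mulVec y j + (2*q * (1-q) * (quadForm g y ^ (-q-1) * quadForm g y) * (linForm A y ^ (2*q-2) * linForm A y)) * A j)
      + (g⁻¹.mulVec A) i * ((2*q * (1-q) * (quadForm g y ^ (-q-1) * quadForm g y) * (linForm A y ^ (2*q-2) * linForm A y)) * g.mulVec y j + (q * (2*q-1) * (quadForm g y ^ (-q-1) * quadForm g y * quadForm g y) * linForm A y ^ (2*q-2)) * A j)) := by
    ext a b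
    rw [hess a b, Matrix.mul_apply]
    simp only [Matrix.of_apply]
    have step : ∀ c, g a c * (((1-q) * (quadForm g y ^ (-q-1) * quadForm g y) * (linForm A y ^ (2*q-2) * linForm A y * linForm A y)) * (if c = b then (1:ℝ) else 0)
        + y c * ((-(2*q) * (1-q) * quadForm g y ^ (-q-1) * (linForm A y ^ (2*q-2) * linForm A y * linForm A y)) * g.mulVec y b + (2*q * (1-q) * (quadForm g y ^ (-q-1) * quadForm g y) * (linForm A y ^ (2*q-2) * linForm A y)) * A b)
        + (g⁻¹.mulVec A) c * ((2*q * (1-q) * (quadForm g y ^ (-q-1) * quadForm g y) * (linForm A y ^ (2*q-2) * linForm A y)) * g.mulVec y b + (q * (2*q-1) * (quadForm g y ^ (-q-1) * quadForm g y * quadForm g y) * linForm A y ^ (2*q-2)) * A b))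
      = (if c = b then g a c * ((1-q) * (quadForm g y ^ (-q-1) * quadForm g y) * (linForm A y ^ (2*q-2) * linForm A y * linForm A y)) else 0)
        + g a c * y c * ((-(2*q) * (1-q) * quadForm g y ^ (-q-1) * (linForm A y ^ (2*q-2) * linForm A y * linForm A y)) * g.mulVec y b + (2*q * (1-q) * (quadForm g y ^ (-q-1) * quadForm g y) * (linForm A y ^ (2*q-2) * linForm A y)) * A b)
        + g a c * (g⁻¹.mulVec A) c * ((2*q * (1-q) * (quadForm g y ^ (-q-1) * quadForm g y) * (linForm A y ^ (2*q-2) * linForm A y)) * g.mulVec y b + (q * (2*q-1) * (quadForm g y ^ (-q-1) * quadForm g y * quadForm g y) * linForm A y ^ (2*q-2)) * A b) := fun c => by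
      by_cases h : c = b
      · simp only [h, if_true, if_pos]
        ring
      · simp only [h, if_false]
        ring
    rw [Finset.sum_congr rfl fun c _ => step c]
    simp only [Finset.sum_add_distrib, Finset.sum_ite_eq', Finset.mem_univ, if_true]
    rw [← Finset.sum_mul, ← Finset.sum_mul,
      show (∑ c, g a c * y c) = g.mulVec y a from rfl, hgwa a]
    ring
  -- determinant of M
  have hdet := det_rank_two ((1-q) * (quadForm g y ^ (-q-1) * quadForm g y) * (linForm A y ^ (2*q-2) * linForm A y * linForm A y)) y
      (fun j => (-(2*q) * (1-q) * quadForm g y ^ (-q-1) * (linForm A y ^ (2*q-2) * linForm A y * linForm A y)) * g.mulVec y j + (2*q * (1-q) * (quadForm g y ^ (-q-1) * quadForm g y) * (linForm A y ^ (2*q-2) * linForm A y)) * A j) (g⁻¹.mulVec A)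
      (fun j => (2*q * (1-q) * (quadForm g y ^ (-q-1) * quadForm g y) * (linForm A y ^ (2*q-2) * linForm A y)) * g.mulVec y j + (q * (2*q-1) * (quadForm g y ^ (-q-1) * quadForm g y * quadForm g y) * linForm A y ^ (2*q-2)) * A j)
  beta_reduce at hdet
  -- dot product reductions
  have hry : ∑ i, ((-(2*q) * (1-q) * quadForm g y ^ (-q-1) * (linForm A y ^ (2*q-2) * linForm A y * linForm A y)) * g.mulVec y i + (2*q * (1-q) * (quadForm g y ^ (-q-1) * quadForm g y) * (linForm A y ^ (2*q-2) * linForm A y)) * A i) * y i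
      = (-(2*q) * (1-q) * quadForm g y ^ (-q-1) * (linForm A y ^ (2*q-2) * linForm A y * linForm A y)) * quadForm g y + (2*q * (1-q) * (quadForm g y ^ (-q-1) * quadForm g y) * (linForm A y ^ (2*q-2) * linForm A y)) * linForm A y := by
    rw [show ∑ i, ((-(2*q) * (1-q) * quadForm g y ^ (-q-1) * (linForm A y ^ (2*q-2) * linForm A y * linForm A y)) * g.mulVec y i + (2*q * (1-q) * (quadForm g y ^ (-q-1) * quadForm g y) * (linForm A y ^ (2*q-2) * linForm A y)) * A i) * y i
        = (-(2*q) * (1-q) * quadForm g y ^ (-q-1) * (linForm A y ^ (2*q-2) * linForm A y * linForm A y)) * (∑ i, g.mulVec y i * y i) + (2*q * (1-q) * (quadForm g y ^ (-q-1) * quadForm g y) * (linForm A y ^ (2*q-2) * linForm A y)) * (∑ i, A i * y i) from by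
      rw [Finset.mul_sum, Finset.mul_sum, ← Finset.sum_add_distrib]
      exact Finset.sum_congr rfl fun i _ => by ring, h_py,
      show (∑ i, A i * y i) = linForm A y from rfl]
  have hsw : ∑ i, ((2*q * (1-q) * (quadForm g y ^ (-q-1) * quadForm g y) * (linForm A y ^ (2*q-2) * linForm A y)) * g.mulVec y i + (q * (2*q-1) * (quadForm g y ^ (-q-1) * quadForm g y * quadForm g y) * linForm A y ^ (2*q-2)) * A i) * (g⁻¹.mulVec A) i
      = (2*q * (1-q) * (quadForm g y ^ (-q-1) * quadForm g y) * (linForm A y ^ (2*q-2) * linForm A y)) * linForm A y + (q * (2*q-1) * (quadForm g y ^ (-q-1) * quadForm g y * quadForm g y) * linForm A y ^ (2*q-2)) * coQuadForm g A := by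
    rw [show ∑ i, ((2*q * (1-q) * (quadForm g y ^ (-q-1) * quadForm g y) * (linForm A y ^ (2*q-2) * linForm A y)) * g.mulVec y i + (q * (2*q-1) * (quadForm g y ^ (-q-1) * quadForm g y * quadForm g y) * linForm A y ^ (2*q-2)) * A i) * (g⁻¹.mulVec A) i
        = (2*q * (1-q) * (quadForm g y ^ (-q-1) * quadForm g y) * (linForm A y ^ (2*q-2) * linForm A y)) * (∑ i, g.mulVec y i * (g⁻¹.mulVec A) i) + (q * (2*q-1) * (quadForm g y ^ (-q-1) * quadForm g y * quadForm g y) * linForm A y ^ (2*q-2)) * (∑ i, A i * (g⁻¹.mulVec A) i) from by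
      rw [Finset.mul_sum, Finset.mul_sum, ← Finset.sum_add_distrib]
      exact Finset.sum_congr rfl fun i _ => by ring, h_pw, h_Aw]
  have hrw : ∑ i, ((-(2*q) * (1-q) * quadForm g y ^ (-q-1) * (linForm A y ^ (2*q-2) * linForm A y * linForm A y)) * g.mulVec y i + (2*q * (1-q) * (quadForm g y ^ (-q-1) * quadForm g y) * (linForm A y ^ (2*q-2) * linForm A y)) * A i) * (g⁻¹.mulVec A) i
      = (-(2*q) * (1-q) * quadForm g y ^ (-q-1) * (linForm A y ^ (2*q-2) * linForm A y * linForm A y)) * linForm A y + (2*q * (1-q) * (quadForm g y ^ (-q-1) * quadForm g y) * (linForm A y ^ (2*q-2) * linForm A y)) * coQuadForm g A := by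
    rw [show ∑ i, ((-(2*q) * (1-q) * quadForm g y ^ (-q-1) * (linForm A y ^ (2*q-2) * linForm A y * linForm A y)) * g.mulVec y i + (2*q * (1-q) * (quadForm g y ^ (-q-1) * quadForm g y) * (linForm A y ^ (2*q-2) * linForm A y)) * A i) * (g⁻¹.mulVec A) i
        = (-(2*q) * (1-q) * quadForm g y ^ (-q-1) * (linForm A y ^ (2*q-2) * linForm A y * linForm A y)) * (∑ i, g.mulVec y i * (g⁻¹.mulVec A) i) + (2*q * (1-q) * (quadForm g y ^ (-q-1) * quadForm g y) * (linForm A y ^ (2*q-2) * linForm A y)) * (∑ i, A i * (g⁻¹.mulVec A) i) from by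
      rw [Finset.mul_sum, Finset.mul_sum, ← Finset.sum_add_distrib]
      exact Finset.sum_congr rfl fun i _ => by ring, h_pw, h_Aw]
  have hsy : ∑ i, ((2*q * (1-q) * (quadForm g y ^ (-q-1) * quadForm g y) * (linForm A y ^ (2*q-2) * linForm A y)) * g.mulVec y i + (q * (2*q-1) * (quadForm g y ^ (-q-1) * quadForm g y * quadForm g y) * linForm A y ^ (2*q-2)) * A i) * y i
      = (2*q * (1-q) * (quadForm g y ^ (-q-1) * quadForm g y) * (linForm A y ^ (2*q-2) * linForm A y)) * quadForm g y + (q * (2*q-1) * (quadForm g y ^ (-q-1) * quadForm g y * quadForm g y) * linForm A y ^ (2*q-2)) * linForm A y := by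
    rw [show ∑ i, ((2*q * (1-q) * (quadForm g y ^ (-q-1) * quadForm g y) * (linForm A y ^ (2*q-2) * linForm A y)) * g.mulVec y i + (q * (2*q-1) * (quadForm g y ^ (-q-1) * quadForm g y * quadForm g y) * linForm A y ^ (2*q-2)) * A i) * y i
        = (2*q * (1-q) * (quadForm g y ^ (-q-1) * quadForm g y) * (linForm A y ^ (2*q-2) * linForm A y)) * (∑ i, g.mulVec y i * y i) + (q * (2*q-1) * (quadForm g y ^ (-q-1) * quadForm g y * quadForm g y) * linForm A y ^ (2*q-2)) * (∑ i, A i * y i) from by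
      rw [Finset.mul_sum, Finset.mul_sum, ← Finset.sum_add_distrib]
      exact Finset.sum_congr rfl fun i _ => by ring, h_py,
      show (∑ i, A i * y i) = linForm A y from rfl]
  rw [hry, hsw, hrw, hsy] at hdet
  rw [hLM, Matrix.det_mul, hdet]
  -- final rpow bookkeeping
  have equ : quadForm g y ^ (-(4*q))
      = (quadForm g y ^ (-q-1))^(4:ℕ) * quadForm g y^(4:ℕ) := by
    rw [← Real.rpow_natCast (quadForm g y ^ (-q-1)) 4, ← Real.rpow_natCast (quadForm g y) 4,
      ← Real.rpow_mul hu.le, ← Real.rpow_add hu,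
      show ((-q-1)*((4:ℕ):ℝ) + ((4:ℕ):ℝ)) = -(4*q) by push_cast; ring]
  have eqv : linForm A y ^ (-(2*(1-4*q)))
      = (linForm A y ^ (2*q-2))^(4:ℕ) * linForm A y^(6:ℕ) := by
    rw [← Real.rpow_natCast (linForm A y ^ (2*q-2)) 4, ← Real.rpow_natCast (linForm A y) 6,
      ← Real.rpow_mul hv.le, ← Real.rpow_add hv,
      show ((2*q-2)*((4:ℕ):ℝ) + ((6:ℕ):ℝ)) = -(2*(1-4*q)) by push_cast; ring]
  rw [equ, eqv]
  ring
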